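/- Let 𝔽 be a Hilbert space, D = (φ_i) a dictionary, π of polynomial growth, Σ^π_M = { Σ_{i∈I} c_i φ_i : I ⊆ {1,…,π(M)}, |I| ≤ M, c_i ∈ ℝ } and Σ̃^{π,c}_M the corresponding sets with orthonormalized atoms and coefficients bounded by c. Then for every bounded set C ⊆ 𝔽, γ*(C|Σ^π) = max_{c>0} γ*(C|Σ̃^{π,c}); in particular, equality is attained for any c ≥ sup_{f∈C} ‖f‖. -/

import Mathlib

open scoped ENNReal BigOperators
open Filter

noncomputable section

/-- The approximation speed `γ*(C|Σ) = sup { γ ∈ ℝ : sup_{f∈C} d(f,Σ_M) = O(M^{−γ}) }`,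
as an extended real (`⊥ = −∞` if the set is empty). -/
def approxSpeed {F : Type*} [PseudoMetricSpace F] (C : Set F) (S : ℕ → Set F) : EReal :=
  sSup {x : EReal | ∃ γ : ℝ, x = (γ : EReal) ∧ ∃ c : ℝ, 0 < c ∧
    ∀ᶠ M : ℕ in atTop, ∀ f ∈ C, Metric.infDist f (S M) ≤ c * (M : ℝ) ^ (-γ)}

/-- The encoding speed `γ*(C) = sup { γ > 0 : log₂ N(C,d,ε) = O(ε^{−1/γ}) as ε → 0 }`
(with value `0` if the supremum is over an empty set), where `N(C,d,ε)` is the minimal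
cardinality of a finite subset of `C` whose closed `ε`-balls cover `C`. -/
def encodingSpeed {F : Type*} [PseudoMetricSpace F] (C : Set F) : EReal :=
  sSup ({(0 : EReal)} ∪ {x : EReal | ∃ γ : ℝ, 0 < γ ∧ x = (γ : EReal) ∧ ∃ c : ℝ, 0 < c ∧
    ∀ᶠ ε : ℝ in nhdsWithin 0 (Set.Ioi 0), ∃ X : Finset F, ↑X ⊆ C ∧
      (C ⊆ ⋃ y ∈ X, Metric.closedBall y ε) ∧
      (X.card : ℝ) ≤ 2 ^ (c * ε ^ (-(1 / γ)))})

/-- `Σ = (Σ_M)` is `γ`-encodable: for every `h > 0` there are `c₁, c₂ > 0` and, for each `M`,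
a finite subset of `Σ_M` which is a `c₁ M^{−γ}`-covering of `Σ_M` and whose base-2 log of the
cardinality is at most `c₂ M^{1+h}`. -/
def IsEncodable {F : Type*} [PseudoMetricSpace F] (S : ℕ → Set F) (γ : ℝ) : Prop :=
  ∀ h : ℝ, 0 < h → ∃ c₁ : ℝ, 0 < c₁ ∧ ∃ c₂ : ℝ, 0 < c₂ ∧ ∀ M : ℕ, 1 ≤ M →
    ∃ X : Finset F, ↑X ⊆ S M ∧
      (S M ⊆ ⋃ y ∈ X, Metric.closedBall y (c₁ * (M : ℝ) ^ (-γ))) ∧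
      Real.logb 2 (X.card) ≤ c₂ * (M : ℝ) ^ ((1 : ℝ) + h)

section AuxLemmas

variable {F : Type*} [NormedAddCommGroup F] [InnerProductSpace ℝ F]

lemma infDist_mono_aux {α : Type*} [PseudoMetricSpace α] {s t : Set α} {f : α}
    (ht : t.Nonempty) (h : ∀ g ∈ t, ∃ p ∈ s, dist f p ≤ dist f g) :
    Metric.infDist f s ≤ Metric.infDist f t := by
  have he : Metric.infEDist f s ≤ Metric.infEDist f t := by
    rw [EMetric.le_infEdist]
    intro g hg
    obtain ⟨p, hp, hd⟩ := h g hg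
    calc Metric.infEDist f s ≤ edist f p := EMetric.infEdist_le_edist_of_mem hp
      _ ≤ edist f g := by
          rw [edist_dist, edist_dist]; exact ENNReal.ofReal_le_ofReal hd
  rw [Metric.infDist, Metric.infDist]
  exact ENNReal.toReal_mono (Metric.infEdist_ne_top ht) he

lemma proj_aux (I : Finset ℕ) (e : ℕ → F) (he : Orthonormal ℝ (fun i : I => e i))
    (f g : F) (hg : g ∈ Submodule.span ℝ (e '' ↑I)) :
    ‖f - (∑ i ∈ I, (inner ℝ (e i) f : ℝ) • e i)‖ ≤ ‖f - g‖ := by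
  set p := ∑ i ∈ I, (inner ℝ (e i) f : ℝ) • e i with hp
  have hpmem : p ∈ Submodule.span ℝ (e '' ↑I) :=
    Submodule.sum_mem _ fun i hi =>
      Submodule.smul_mem _ _ (Submodule.subset_span ⟨i, hi, rfl⟩)
  have hbase : ∀ j ∈ I, (inner ℝ (f - p) (e j) : ℝ) = 0 := by
    intro j hj
    have key : ∀ i ∈ I, (inner ℝ (e i) (e j) : ℝ) = if i = j then 1 else 0 := fun i hi => by
      simpa [Subtype.mk.injEq] using (orthonormal_iff_ite.mp he) ⟨i, hi⟩ ⟨j, hj⟩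
    rw [inner_sub_left, hp, sum_inner]
    rw [Finset.sum_congr rfl fun i hi => by rw [real_inner_smul_left, key i hi]]
    simp [Finset.sum_ite_eq', hj, real_inner_comm]
  have horth : ∀ v ∈ Submodule.span ℝ (e '' ↑I), (inner ℝ (f - p) v : ℝ) = 0 := by
    intro v hv
    induction hv using Submodule.span_induction with
    | mem x hx => obtain ⟨i, hi, rfl⟩ := hx; exact hbase i hi
    | zero => simp
    | add x y _ _ hx hy => rw [inner_add_right, hx, hy]; ring
    | smul a x _ hx => rw [real_inner_smul_right, hx]; ring
  have hzero : (inner ℝ (f - p) (p - g) : ℝ) = 0 := horth _ (Submodule.sub_mem _ hpmem hg)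
  have hsq : ‖f - g‖ ^ 2 = ‖f - p‖ ^ 2 + ‖p - g‖ ^ 2 := by
    have hd : f - g = (f - p) + (p - g) := by abel
    rw [hd, @norm_add_sq_real F _ _, hzero]; ring
  nlinarith [norm_nonneg (f - p), norm_nonneg (f - g), sq_nonneg ‖p - g‖,
    norm_nonneg (p - g)]

lemma tilde_co_aux (φ : ℕ → F) (ont : Finset ℕ → ℕ → F)
    (hspan : ∀ I : Finset ℕ,
      Submodule.span ℝ (ont I '' ↑I) = Submodule.span ℝ (φ '' ↑I))
    (I : Finset ℕ) (ct : ℕ → ℝ) :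
    ∃ co : ℕ → ℝ, ∑ i ∈ I, ct i • ont I i = ∑ i ∈ I, co i • φ i := by
  have hmem : (∑ i ∈ I, ct i • ont I i) ∈ Submodule.span ℝ (φ '' ↑I) := by
    rw [← hspan]
    exact Submodule.sum_mem _ fun i hi =>
      Submodule.smul_mem _ _ (Submodule.subset_span ⟨i, hi, rfl⟩)
  rw [Finsupp.mem_span_image_iff_linearCombination] at hmem
  obtain ⟨l, hl, hsum⟩ := hmem
  refine ⟨l, ?_⟩
  rw [← hsum, Finsupp.linearCombination_apply]
  exact (Finsupp.sum_of_support_subset l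
    (Finset.coe_subset.mp ((Finsupp.mem_supported ℝ l).mp hl))
    (fun i a => a • φ i) (by simp)).symm ▸ rfl

lemma tilde_zero_mem (π : ℕ → ℕ) (ont : Finset ℕ → ℕ → F) (c : ℝ) (M : ℕ) :
    (0 : F) ∈ {g : F | ∃ I : Finset ℕ, I ⊆ Finset.range (π M) ∧ I.card ≤ M ∧
        ∃ ct : ℕ → ℝ, (∀ i ∈ I, |ct i| ≤ c) ∧ g = ∑ i ∈ I, ct i • ont I i} :=
  ⟨∅, by simp, by simp, fun _ => 0, by simp, by simp⟩

lemma sigma_zero_mem (φ : ℕ → F) (π : ℕ → ℕ) (M : ℕ) :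
    (0 : F) ∈ {g : F | ∃ I : Finset ℕ, I ⊆ Finset.range (π M) ∧ I.card ≤ M ∧
        ∃ co : ℕ → ℝ, g = ∑ i ∈ I, co i • φ i} :=
  ⟨∅, by simp, by simp, fun _ => 0, by simp⟩

lemma sigma_infDist_le_tilde (φ : ℕ → F) (π : ℕ → ℕ) (ont : Finset ℕ → ℕ → F)
    (hspan : ∀ I : Finset ℕ,
      Submodule.span ℝ (ont I '' ↑I) = Submodule.span ℝ (φ '' ↑I))
    (c : ℝ) (f : F) (M : ℕ) :
    Metric.infDist f {g : F | ∃ I : Finset ℕ, I ⊆ Finset.range (π M) ∧ I.card ≤ M ∧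
        ∃ co : ℕ → ℝ, g = ∑ i ∈ I, co i • φ i} ≤
      Metric.infDist f {g : F | ∃ I : Finset ℕ, I ⊆ Finset.range (π M) ∧ I.card ≤ M ∧
        ∃ ct : ℕ → ℝ, (∀ i ∈ I, |ct i| ≤ c) ∧ g = ∑ i ∈ I, ct i • ont I i} := by
  refine infDist_mono_aux ⟨0, tilde_zero_mem π ont c M⟩ ?_
  rintro g ⟨I, h1, h2, ct, _, rfl⟩
  obtain ⟨co, hco⟩ := tilde_co_aux φ ont hspan I ct
  exact ⟨_, ⟨I, h1, h2, co, hco⟩, le_rfl⟩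

lemma infDist_eq_aux (φ : ℕ → F) (π : ℕ → ℕ) (ont : Finset ℕ → ℕ → F)
    (hont : ∀ I : Finset ℕ, Orthonormal ℝ (fun i : I => ont I i))
    (hspan : ∀ I : Finset ℕ,
      Submodule.span ℝ (ont I '' ↑I) = Submodule.span ℝ (φ '' ↑I))
    (c : ℝ) (f : F) (hf : ‖f‖ ≤ c) (M : ℕ) :
    Metric.infDist f {g : F | ∃ I : Finset ℕ, I ⊆ Finset.range (π M) ∧ I.card ≤ M ∧
        ∃ co : ℕ → ℝ, g = ∑ i ∈ I, co i • φ i} =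
      Metric.infDist f {g : F | ∃ I : Finset ℕ, I ⊆ Finset.range (π M) ∧ I.card ≤ M ∧
        ∃ ct : ℕ → ℝ, (∀ i ∈ I, |ct i| ≤ c) ∧ g = ∑ i ∈ I, ct i • ont I i} := by
  refine le_antisymm (sigma_infDist_le_tilde φ π ont hspan c f M) ?_
  refine infDist_mono_aux ⟨0, sigma_zero_mem φ π M⟩ ?_
  rintro g ⟨I, h1, h2, co, rfl⟩
  set g := ∑ i ∈ I, co i • φ i with hg
  set p := ∑ i ∈ I, (inner ℝ (ont I i) f : ℝ) • ont I i with hpdef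
  have hgspan : g ∈ Submodule.span ℝ (ont I '' ↑I) := by
    rw [hspan]
    exact Submodule.sum_mem _ fun i hi =>
      Submodule.smul_mem _ _ (Submodule.subset_span ⟨i, hi, rfl⟩)
  have hbound : ∀ i ∈ I, |(inner ℝ (ont I i) f : ℝ)| ≤ c := by
    intro i hi
    refine le_trans (le_trans (abs_real_inner_le_norm _ _) ?_) hf
    have h1 : ‖ont I i‖ = 1 := (hont I).1 ⟨i, hi⟩
    rw [h1, one_mul]
  refine ⟨p, ⟨I, h1, h2, fun i => (inner ℝ (ont I i) f : ℝ), hbound, rfl⟩, ?_⟩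
  rw [dist_eq_norm, dist_eq_norm]
  exact proj_aux I (ont I) (hont I) f g hgspan

end AuxLemmas

/-- In a Hilbert space, for every bounded set `C`, the approximation speed
of `C` by the dictionary sets `Σ^π` equals the supremum over `c > 0` of the speeds by the
orthonormalized, coefficient-bounded sets `Σ̃^{π,c}`; moreover equality is attained for any
`c ≥ sup_{f∈C} ‖f‖`. -/
theorem approxSpeed_dictionary_eq_sup_orthonormalized {F : Type*} [NormedAddCommGroup F]
    [InnerProductSpace ℝ F] [CompleteSpace F]
    (φ : ℕ → F) (π : ℕ → ℕ)
    (hπ : ∃ Cp : ℝ, 0 < Cp ∧ ∃ k : ℕ, ∀ M : ℕ, 1 ≤ M → (π M : ℝ) ≤ Cp * (M : ℝ) ^ k)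
    (ont : Finset ℕ → ℕ → F)
    (hont : ∀ I : Finset ℕ, Orthonormal ℝ (fun i : I => ont I i))
    (hspan : ∀ I : Finset ℕ,
      Submodule.span ℝ (ont I '' ↑I) = Submodule.span ℝ (φ '' ↑I))
    (C : Set F) (hC : Bornology.IsBounded C) :
    (approxSpeed C (fun M : ℕ =>
        {f : F | ∃ I : Finset ℕ, I ⊆ Finset.range (π M) ∧ I.card ≤ M ∧
          ∃ co : ℕ → ℝ, f = ∑ i ∈ I, co i • φ i}) =
      ⨆ (c : ℝ) (_ : 0 < c), approxSpeed C (fun M : ℕ =>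
        {f : F | ∃ I : Finset ℕ, I ⊆ Finset.range (π M) ∧ I.card ≤ M ∧
          ∃ ct : ℕ → ℝ, (∀ i ∈ I, |ct i| ≤ c) ∧ f = ∑ i ∈ I, ct i • ont I i})) ∧
    ∀ c : ℝ, (∀ f ∈ C, ‖f‖ ≤ c) →
      approxSpeed C (fun M : ℕ =>
        {f : F | ∃ I : Finset ℕ, I ⊆ Finset.range (π M) ∧ I.card ≤ M ∧
          ∃ ct : ℕ → ℝ, (∀ i ∈ I, |ct i| ≤ c) ∧ f = ∑ i ∈ I, ct i • ont I i}) =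
      approxSpeed C (fun M : ℕ =>
        {f : F | ∃ I : Finset ℕ, I ⊆ Finset.range (π M) ∧ I.card ≤ M ∧
          ∃ co : ℕ → ℝ, f = ∑ i ∈ I, co i • φ i}) := by
  have h2 : ∀ c : ℝ, (∀ f ∈ C, ‖f‖ ≤ c) →
      approxSpeed C (fun M : ℕ =>
        {f : F | ∃ I : Finset ℕ, I ⊆ Finset.range (π M) ∧ I.card ≤ M ∧
          ∃ ct : ℕ → ℝ, (∀ i ∈ I, |ct i| ≤ c) ∧ f = ∑ i ∈ I, ct i • ont I i}) =
      approxSpeed C (fun M : ℕ =>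
        {f : F | ∃ I : Finset ℕ, I ⊆ Finset.range (π M) ∧ I.card ≤ M ∧
          ∃ co : ℕ → ℝ, f = ∑ i ∈ I, co i • φ i}) := by
    intro c hc
    unfold approxSpeed
    congr 1
    ext x
    refine exists_congr fun γ => and_congr_right fun _ => exists_congr fun c' =>
      and_congr_right fun _ => eventually_congr (Eventually.of_forall fun M =>
        forall₂_congr fun f hf => ?_)
    rw [infDist_eq_aux φ π ont hont hspan c f (hc f hf) M]
  refine ⟨le_antisymm ?_ ?_, h2⟩
  · obtain ⟨r, hr⟩ := hC.subset_closedBall 0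
    have hfc0 : ∀ f ∈ C, ‖f‖ ≤ max r 1 := fun f hf =>
      le_trans (by simpa using hr hf) (le_max_left _ _)
    have hc0 : (0 : ℝ) < max r 1 := lt_of_lt_of_le one_pos (le_max_right r 1)
    rw [← h2 (max r 1) hfc0]
    exact le_iSup₂ (f := fun (c : ℝ) (_ : 0 < c) => approxSpeed C (fun M : ℕ =>
        {f : F | ∃ I : Finset ℕ, I ⊆ Finset.range (π M) ∧ I.card ≤ M ∧
          ∃ ct : ℕ → ℝ, (∀ i ∈ I, |ct i| ≤ c) ∧ f = ∑ i ∈ I, ct i • ont I i}))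
      (max r 1) hc0
  · refine iSup₂_le fun c hc => sSup_le_sSup ?_
    rintro x ⟨γ, rfl, c', hc', hev⟩
    refine ⟨γ, rfl, c', hc', hev.mono fun M hM f hf => ?_⟩
    exact le_trans (sigma_infDist_le_tilde φ π ont hspan c f M) (hM f hf)
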